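/- arXiv:2512.03604 — 2 statements merged into one kernel-verified Lean document; each statement's English description precedes it below -/
import Mathlib

section
/- Let α := λ_min(Q) - σ λ_max(P) > 0. Suppose x : [0,∞) → ℝⁿ is differentiable and there exists e : [0,∞) → ℝⁿ such that for all t ≥ 0: x'(t) = A_cl x(t) + B K e(t) and 2 x(t)ᵀ P B K e(t) ≤ σ x(t)ᵀ P x(t). Then V(t) = x(t)ᵀ P x(t) satisfies V(t) ≤ V(0)·exp(-(α/λ_max(P)) t) for all t ≥ 0; consequently ‖x(t)‖² ≤ (λ_max(P)/λ_min(P))·exp(-(α/λ_max(P)) t)·‖x(0)‖², and x(t) → 0 as t → ∞. -/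
open Matrix


lemma quad_eq_sum {n : ℕ} {A : Matrix (Fin n) (Fin n) ℝ} (hA : A.IsHermitian)
    (x : Fin n → ℝ) :
    ∃ y : Fin n → ℝ, x ⬝ᵥ (A *ᵥ x) = ∑ i, hA.eigenvalues i * (y i)^2 ∧
      x ⬝ᵥ x = ∑ i, (y i)^2 := by
  classical
  set U : Matrix (Fin n) (Fin n) ℝ := (hA.eigenvectorUnitary : Matrix (Fin n) (Fin n) ℝ) with hU
  have hUU : U * Uᵀ = 1 := by
    have := (hA.eigenvectorUnitary).2
    rw [Unitary.mem_iff] at this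
    have h2 := this.2
    rwa [star_eq_conjTranspose, conjTranspose_eq_transpose_of_trivial] at h2
  refine ⟨Uᵀ *ᵥ x, ?_, ?_⟩
  · have hspec := hA.spectral_theorem
    rw [Unitary.conjStarAlgAut_apply, star_eq_conjTranspose, conjTranspose_eq_transpose_of_trivial,
      RCLike.ofReal_real_eq_id] at hspec
    conv_lhs => rw [hspec]
    rw [← mulVec_mulVec, ← mulVec_mulVec, dotProduct_mulVec, ← mulVec_transpose]
    rw [← hU]
    simp only [dotProduct, mulVec_diagonal, Function.comp_apply, id_eq]
    exact Finset.sum_congr rfl fun i _ => by ring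
  · have key : (Uᵀ *ᵥ x) ⬝ᵥ (Uᵀ *ᵥ x) = x ⬝ᵥ x := by
      rw [dotProduct_mulVec, ← mulVec_transpose, transpose_transpose, mulVec_mulVec, hUU,
        one_mulVec]
    rw [← key]
    simp [dotProduct, sq]
open Matrix

lemma quad_le_smax {n : ℕ} {A : Matrix (Fin n) (Fin n) ℝ} (hA : A.IsHermitian)
    (x : Fin n → ℝ)
    (hy : ∃ y : Fin n → ℝ, x ⬝ᵥ (A *ᵥ x) = ∑ i, hA.eigenvalues i * (y i)^2 ∧
      x ⬝ᵥ x = ∑ i, (y i)^2) :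
    x ⬝ᵥ (A *ᵥ x) ≤ (⨆ i, hA.eigenvalues i) * (x ⬝ᵥ x) := by
  obtain ⟨y, h1, h2⟩ := hy
  rw [h1, h2, Finset.mul_sum]
  refine Finset.sum_le_sum fun i _ => ?_
  exact mul_le_mul_of_nonneg_right
    (le_ciSup (Set.Finite.bddAbove (Set.finite_range _)) i) (sq_nonneg _)

lemma smin_le_quad {n : ℕ} {A : Matrix (Fin n) (Fin n) ℝ} (hA : A.IsHermitian)
    (x : Fin n → ℝ)
    (hy : ∃ y : Fin n → ℝ, x ⬝ᵥ (A *ᵥ x) = ∑ i, hA.eigenvalues i * (y i)^2 ∧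
      x ⬝ᵥ x = ∑ i, (y i)^2) :
    (⨅ i, hA.eigenvalues i) * (x ⬝ᵥ x) ≤ x ⬝ᵥ (A *ᵥ x) := by
  obtain ⟨y, h1, h2⟩ := hy
  rw [h1, h2, Finset.mul_sum]
  refine Finset.sum_le_sum fun i _ => ?_
  exact mul_le_mul_of_nonneg_right
    (ciInf_le (Set.Finite.bddBelow (Set.finite_range _)) i) (sq_nonneg _)

lemma hasDerivAt_quadForm {n : ℕ} (P : Matrix (Fin n) (Fin n) ℝ)
    {x : ℝ → EuclideanSpace ℝ (Fin n)} {x' : EuclideanSpace ℝ (Fin n)} {t : ℝ}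
    (h : HasDerivAt x x' t) :
    HasDerivAt (fun s => x s ⬝ᵥ (P *ᵥ x s))
      (x' ⬝ᵥ (P *ᵥ x t) + x t ⬝ᵥ (P *ᵥ x')) t := by
  have hc : ∀ i, HasDerivAt (fun s => x s i) (x' i) t := by
    intro i
    have := (EuclideanSpace.proj (𝕜 := ℝ) i).hasFDerivAt.comp_hasDerivAt t h
    exact this
  have key : HasDerivAt (fun s => ∑ i, ∑ j, x s i * (P i j * x s j))
      (∑ i, ∑ j, (x' i * (P i j * x t j) + x t i * (P i j * x' j))) t := by
    refine HasDerivAt.fun_sum fun i _ => HasDerivAt.fun_sum fun j _ => ?_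
    exact (hc i).mul ((hc j).const_mul (P i j))
  have e1 : (fun s => x s ⬝ᵥ (P *ᵥ x s)) = fun s => ∑ i, ∑ j, x s i * (P i j * x s j) := by
    funext s; simp [dotProduct, mulVec, Finset.mul_sum]
  have e2 : x' ⬝ᵥ (P *ᵥ x t) + x t ⬝ᵥ (P *ᵥ x') =
      ∑ i, ∑ j, (x' i * (P i j * x t j) + x t i * (P i j * x' j)) := by
    simp [dotProduct, mulVec, Finset.mul_sum, Finset.sum_add_distrib]
  rw [e1, e2]; exact key

lemma norm_sq_eq_dot {n : ℕ} (v : EuclideanSpace ℝ (Fin n)) : ‖v‖ ^ 2 = v ⬝ᵥ v := by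
  rw [EuclideanSpace.norm_eq, Real.sq_sqrt (by positivity)]
  simp [dotProduct, Real.norm_eq_abs, sq_abs, sq]

lemma dp_transfer {n : ℕ} (M : Matrix (Fin n) (Fin n) ℝ) (v w : Fin n → ℝ) :
    (M *ᵥ v) ⬝ᵥ w = v ⬝ᵥ (Mᵀ *ᵥ w) := by
  rw [dotProduct_mulVec, ← mulVec_transpose, transpose_transpose]


/-- **Exponential decay and asymptotic stability under directional triggering.**
With `α := λ_min(Q) - σ λ_max(P) > 0`, if `x' = A_cl x + B K e` and the directional
triggering condition holds along the trajectory for all `t ≥ 0`, then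
`V(t) = x(t)ᵀ P x(t)` satisfies `V(t) ≤ V(0) exp(-(α/λ_max(P)) t)`, hence
`‖x(t)‖² ≤ (λ_max(P)/λ_min(P)) exp(-(α/λ_max(P)) t) ‖x(0)‖²` and `x(t) → 0`. -/
theorem directional_trigger_asymptotic_stability {n m : ℕ}
    (A : Matrix (Fin n) (Fin n) ℝ) (B : Matrix (Fin n) (Fin m) ℝ)
    (K : Matrix (Fin m) (Fin n) ℝ) (P Q : Matrix (Fin n) (Fin n) ℝ)
    (hP : P.PosDef) (hQ : Q.PosDef)
    (hLyap : (A - B * K)ᵀ * P + P * (A - B * K) = -Q)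
    (σ : ℝ) (hσ : σ ∈ Set.Ioo (0 : ℝ) 1)
    (hα : 0 < (⨅ i, hQ.isHermitian.eigenvalues i)
            - σ * ⨆ i, hP.isHermitian.eigenvalues i)
    (x e : ℝ → EuclideanSpace ℝ (Fin n))
    (hx : ∀ t ≥ (0 : ℝ), HasDerivAt x
      ((WithLp.toLp 2 ((A - B * K) *ᵥ x t + (B * K) *ᵥ e t) : EuclideanSpace ℝ (Fin n))) t)
    (htrig : ∀ t ≥ (0 : ℝ),
      2 * (x t ⬝ᵥ ((P * B * K) *ᵥ e t)) ≤ σ * (x t ⬝ᵥ (P *ᵥ x t))) :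
    let lmaxP : ℝ := ⨆ i, hP.isHermitian.eigenvalues i
    let lminP : ℝ := ⨅ i, hP.isHermitian.eigenvalues i
    let α : ℝ := (⨅ i, hQ.isHermitian.eigenvalues i) - σ * lmaxP
    (∀ t ≥ (0 : ℝ),
        x t ⬝ᵥ (P *ᵥ x t) ≤ (x 0 ⬝ᵥ (P *ᵥ x 0)) * Real.exp (-(α / lmaxP) * t)) ∧
    (∀ t ≥ (0 : ℝ),
        ‖x t‖ ^ 2 ≤ (lmaxP / lminP) * Real.exp (-(α / lmaxP) * t) * ‖x 0‖ ^ 2) ∧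
    Filter.Tendsto x Filter.atTop (nhds 0) := by
  obtain ⟨hσ0, hσ1⟩ := hσ
  intro lmaxP lminP α
  rcases Nat.eq_zero_or_pos n with hn | hn
  · exfalso
    subst hn
    simp only [Real.iInf_of_isEmpty, Real.iSup_of_isEmpty, mul_zero, sub_zero] at hα
    exact lt_irrefl 0 hα
  haveI : Nonempty (Fin n) := Fin.pos_iff_nonempty.mp hn
  classical
  have hmax_pos : 0 < lmaxP :=
    lt_of_lt_of_le (hP.eigenvalues_pos (Classical.arbitrary _))
      (le_ciSup (Set.Finite.bddAbove (Set.finite_range _)) _)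
  have hmin_pos : 0 < lminP := by
    show 0 < ⨅ i, hP.isHermitian.eigenvalues i
    obtain ⟨i, hi⟩ := exists_eq_ciInf_of_finite (f := hP.isHermitian.eigenvalues)
    exact hi ▸ hP.eigenvalues_pos i
  have hminQ_pos : 0 < ⨅ i, hQ.isHermitian.eigenvalues i := by
    obtain ⟨i, hi⟩ := exists_eq_ciInf_of_finite (f := hQ.isHermitian.eigenvalues)
    exact hi ▸ hQ.eigenvalues_pos i
  have hα' : 0 < α := hα
  set c : ℝ := α / lmaxP with hc_def
  have hc : 0 < c := div_pos hα' hmax_pos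
  have hc_eq : c * lmaxP = (⨅ i, hQ.isHermitian.eigenvalues i) - σ * lmaxP := by
    rw [hc_def, div_mul_cancel₀ _ (ne_of_gt hmax_pos)]
  have hPsymm : Pᵀ = P := by
    have h := hP.isHermitian
    rwa [Matrix.IsHermitian, conjTranspose_eq_transpose_of_trivial] at h
  set V : ℝ → ℝ := fun t => x t ⬝ᵥ (P *ᵥ x t) with hVdef
  -- algebraic identity for the derivative
  have e1 : ∀ v w : Fin n → ℝ,
      ((A - B * K) *ᵥ v + (B * K) *ᵥ w) ⬝ᵥ (P *ᵥ v)
        + v ⬝ᵥ (P *ᵥ ((A - B * K) *ᵥ v + (B * K) *ᵥ w))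
      = v ⬝ᵥ (((A - B * K)ᵀ * P + P * (A - B * K)) *ᵥ v)
        + 2 * (v ⬝ᵥ ((P * B * K) *ᵥ w)) := by
    intro v w
    rw [add_dotProduct, mulVec_add, dotProduct_add,
      dp_transfer (A - B * K) v (P *ᵥ v),
      dotProduct_comm ((B * K) *ᵥ w) (P *ᵥ v),
      dp_transfer P v ((B * K) *ᵥ w), hPsymm,
      mulVec_mulVec, mulVec_mulVec, mulVec_mulVec,
      add_mulVec, dotProduct_add, Matrix.mul_assoc P B K]
    ring
  have hVd : ∀ t ≥ (0 : ℝ), HasDerivAt V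
      (x t ⬝ᵥ ((-Q) *ᵥ x t) + 2 * (x t ⬝ᵥ ((P * B * K) *ᵥ e t))) t := by
    intro t ht
    have h0 := hasDerivAt_quadForm P (hx t ht)
    have h1 := e1 (x t) (e t)
    rw [hLyap] at h1
    rw [h1] at h0
    exact h0
  -- derivative bound
  have hVbound : ∀ t ≥ (0 : ℝ),
      x t ⬝ᵥ ((-Q) *ᵥ x t) + 2 * (x t ⬝ᵥ ((P * B * K) *ᵥ e t)) ≤ -c * V t := by
    intro t ht
    have hq := smin_le_quad hQ.isHermitian (x t) (quad_eq_sum hQ.isHermitian (x t))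
    have hp := quad_le_smax hP.isHermitian (x t) (quad_eq_sum hP.isHermitian (x t))
    have hneg : x t ⬝ᵥ ((-Q) *ᵥ x t) = -(x t ⬝ᵥ (Q *ᵥ x t)) := by
      rw [neg_mulVec, dotProduct_neg]
    have htr := htrig t ht
    have hxx : (0 : ℝ) ≤ x t ⬝ᵥ x t := by
      rw [← norm_sq_eq_dot]; positivity
    rw [hneg]
    have hVt : V t ≤ lmaxP * (x t ⬝ᵥ x t) := hp
    have hQt : (⨅ i, hQ.isHermitian.eigenvalues i) * (x t ⬝ᵥ x t) ≤ x t ⬝ᵥ (Q *ᵥ x t) := hq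
    nlinarith [mul_le_mul_of_nonneg_left hVt (le_of_lt hc)]
  -- Gronwall
  have hg : ∀ t ≥ (0 : ℝ), HasDerivAt (fun s => V s * Real.exp (c * s))
      ((x t ⬝ᵥ ((-Q) *ᵥ x t) + 2 * (x t ⬝ᵥ ((P * B * K) *ᵥ e t))) * Real.exp (c * t)
        + V t * (Real.exp (c * t) * c)) t := by
    intro t ht
    have hexp : HasDerivAt (fun s : ℝ => Real.exp (c * s)) (Real.exp (c * t) * c) t := by
      have := ((hasDerivAt_id t).const_mul c).exp
      simpa using this
    exact (hVd t ht).mul hexp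
  have hanti : AntitoneOn (fun s => V s * Real.exp (c * s)) (Set.Ici 0) := by
    apply antitoneOn_of_deriv_nonpos (convex_Ici 0)
    · exact fun t ht => ((hg t ht).continuousAt).continuousWithinAt
    · intro t ht
      rw [interior_Ici] at ht
      exact ((hg t (le_of_lt ht)).differentiableAt).differentiableWithinAt
    · intro t ht
      rw [interior_Ici] at ht
      rw [(hg t (le_of_lt ht)).deriv]
      have h1 := hVbound t (le_of_lt ht)
      have h2 := Real.exp_pos (c * t)
      nlinarith
  have claim1 : ∀ t ≥ (0 : ℝ), V t ≤ V 0 * Real.exp (-(c) * t) := by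
    intro t ht
    have h := hanti (Set.self_mem_Ici) ht ht
    simp only [mul_zero, Real.exp_zero, mul_one] at h
    have h2 := mul_le_mul_of_nonneg_right h (le_of_lt (Real.exp_pos (-(c * t))))
    rw [mul_assoc, ← Real.exp_add, add_neg_cancel, Real.exp_zero, mul_one] at h2
    calc V t ≤ V 0 * Real.exp (-(c * t)) := h2
    _ = V 0 * Real.exp (-(c) * t) := by rw [neg_mul]
  have hVlow : ∀ t, lminP * ‖x t‖ ^ 2 ≤ V t := by
    intro t
    rw [norm_sq_eq_dot]
    exact smin_le_quad hP.isHermitian (x t) (quad_eq_sum hP.isHermitian (x t))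
  have hVhigh : ∀ t, V t ≤ lmaxP * ‖x t‖ ^ 2 := by
    intro t
    rw [norm_sq_eq_dot]
    exact quad_le_smax hP.isHermitian (x t) (quad_eq_sum hP.isHermitian (x t))
  have claim2 : ∀ t ≥ (0 : ℝ),
      ‖x t‖ ^ 2 ≤ (lmaxP / lminP) * Real.exp (-(c) * t) * ‖x 0‖ ^ 2 := by
    intro t ht
    rw [← mul_le_mul_iff_right₀ hmin_pos]
    have hE : (0 : ℝ) < Real.exp (-(c) * t) := Real.exp_pos _
    have : lminP * ((lmaxP / lminP) * Real.exp (-(c) * t) * ‖x 0‖ ^ 2)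
        = lmaxP * ‖x 0‖ ^ 2 * Real.exp (-(c) * t) := by
      field_simp
    rw [this]
    calc lminP * ‖x t‖ ^ 2 ≤ V t := hVlow t
    _ ≤ V 0 * Real.exp (-(c) * t) := claim1 t ht
    _ ≤ lmaxP * ‖x 0‖ ^ 2 * Real.exp (-(c) * t) :=
        mul_le_mul_of_nonneg_right (hVhigh 0) (le_of_lt hE)
  refine ⟨claim1, claim2, ?_⟩
  -- asymptotic stability
  have hb : Filter.Tendsto (fun t : ℝ => (lmaxP / lminP) * Real.exp (-(c) * t) * ‖x 0‖ ^ 2)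
      Filter.atTop (nhds 0) := by
    have h1 : Filter.Tendsto (fun t : ℝ => c * t) Filter.atTop Filter.atTop :=
      Filter.Tendsto.const_mul_atTop hc Filter.tendsto_id
    have h2 : Filter.Tendsto (fun t : ℝ => Real.exp (-(c) * t)) Filter.atTop (nhds 0) := by
      have h := Real.tendsto_exp_neg_atTop_nhds_zero.comp h1
      have heq : (fun t : ℝ => Real.exp (-(c) * t))
          = (fun s => Real.exp (-s)) ∘ fun t : ℝ => c * t := by
        funext t; simp [neg_mul]
      rw [heq]; exact h
    have h3 := (h2.const_mul (lmaxP / lminP)).mul_const (‖x 0‖ ^ 2)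
    simpa using h3
  have hsq : Filter.Tendsto (fun t => ‖x t‖ ^ 2) Filter.atTop (nhds 0) := by
    apply squeeze_zero' (Filter.Eventually.of_forall fun t => by positivity)
      _ hb
    filter_upwards [Filter.eventually_ge_atTop (0 : ℝ)] with t ht
    exact claim2 t ht
  have hnorm : Filter.Tendsto (fun t => ‖x t‖) Filter.atTop (nhds 0) := by
    have := (Real.continuous_sqrt.tendsto 0).comp hsq
    simp only [Real.sqrt_zero] at this
    convert this using 2 with t
    simp [Function.comp, Real.sqrt_sq (norm_nonneg _)]
  exact tendsto_zero_iff_norm_tendsto_zero.mpr hnorm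
end

section
/- Assume P B K ≠ 0 and let Γ = σ λ_min(P) / (2 ‖P B K‖), L₁ = ‖B K‖, L₂ = ‖A_cl‖ + ‖B K‖, L₃ = ‖A_cl‖, and τ* = ∫₀^Γ ds / (L₁ s² + L₂ s + L₃). Suppose x : ℝ → ℝⁿ is differentiable, t_k < t_{k+1}, e(t) := x(t) - x(t_k) satisfies x'(t) = A_cl x(t) + B K e(t) for t ∈ [t_k, t_{k+1}], x(t) ≠ 0 on [t_k, t_{k+1}], e(t) ≠ 0 on (t_k, t_{k+1}], and the triggering condition fires at t_{k+1}, i.e., 2 x(t_{k+1})ᵀ P B K e(t_{k+1}) ≥ σ x(t_{k+1})ᵀ P x(t_{k+1}). Then t_{k+1} - t_k ≥ τ* > 0; in particular, Zeno behavior is excluded. -/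
open Matrix

/-- Euclidean (ℓ²) operator norm of a square real matrix. -/
noncomputable def euclideanOpNorm {n : ℕ} (M : Matrix (Fin n) (Fin n) ℝ) : ℝ :=
  ‖LinearMap.toContinuousLinearMap (Matrix.toEuclideanLin M)‖

lemma euclideanOpNorm_nonneg {n : ℕ} (M : Matrix (Fin n) (Fin n) ℝ) :
    0 ≤ euclideanOpNorm M := norm_nonneg _

lemma mulVec_norm_le {n : ℕ} (M : Matrix (Fin n) (Fin n) ℝ) (v : EuclideanSpace ℝ (Fin n)) :
    ‖((WithLp.equiv 2 (Fin n → ℝ)).symm (M *ᵥ v) : EuclideanSpace ℝ (Fin n))‖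
      ≤ euclideanOpNorm M * ‖v‖ :=
  (LinearMap.toContinuousLinearMap (Matrix.toEuclideanLin M)).le_opNorm v

lemma euclideanOpNorm_eq_zero {n : ℕ} {M : Matrix (Fin n) (Fin n) ℝ}
    (h : euclideanOpNorm M = 0) (v : EuclideanSpace ℝ (Fin n)) :
    ((WithLp.equiv 2 (Fin n → ℝ)).symm (M *ᵥ v) : EuclideanSpace ℝ (Fin n)) = 0 := by
  have := mulVec_norm_le M v
  rw [h, zero_mul] at this
  exact norm_le_zero_iff.mp this

lemma euclideanOpNorm_pos {n : ℕ} {M : Matrix (Fin n) (Fin n) ℝ} (hM : M ≠ 0) :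
    0 < euclideanOpNorm M := by
  rcases (euclideanOpNorm_nonneg M).lt_or_eq with h | h
  · exact h
  exfalso
  apply hM
  ext i j
  have h0 := euclideanOpNorm_eq_zero h.symm ((WithLp.equiv 2 (Fin n → ℝ)).symm (Pi.single j 1))
  have h1 : (M *ᵥ Pi.single j 1) i = 0 := congrFun (congrArg (WithLp.equiv 2 (Fin n → ℝ)) h0) i
  simpa [Matrix.mulVec_single] using h1

lemma dotProduct_eq_inner {n : ℕ} (a b : EuclideanSpace ℝ (Fin n)) :
    (a : Fin n → ℝ) ⬝ᵥ (b : Fin n → ℝ) = (inner ℝ a b : ℝ) := by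
  simp [dotProduct, PiLp.inner_apply, RCLike.inner_apply, mul_comm]

lemma lamMin_mul_le {n : ℕ} [Nonempty (Fin n)] {P : Matrix (Fin n) (Fin n) ℝ}
    (hP : P.PosDef) (v : EuclideanSpace ℝ (Fin n)) :
    (⨅ i, hP.isHermitian.eigenvalues i) * ‖v‖ ^ 2 ≤ (v : Fin n → ℝ) ⬝ᵥ (P *ᵥ v) := by
  classical
  set hH := hP.isHermitian
  set b := hH.eigenvectorBasis
  set μ := hH.eigenvalues
  have hT : LinearMap.IsSymmetric (Matrix.toEuclideanLin P) :=
    Matrix.isHermitian_iff_isSymmetric.mp hH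
  have hb : ∀ j, Matrix.toEuclideanLin P (b j) = μ j • b j := by
    intro j
    apply PiLp.ext
    intro i
    exact congrFun (hH.mulVec_eigenvectorBasis j) i
  have key : (v : Fin n → ℝ) ⬝ᵥ (P *ᵥ v) = (inner ℝ v (Matrix.toEuclideanLin P v) : ℝ) :=
    dotProduct_eq_inner v (Matrix.toEuclideanLin P v)
  rw [key]
  have expand : (inner ℝ v (Matrix.toEuclideanLin P v) : ℝ)
      = ∑ i, μ i * (inner ℝ (b i) v : ℝ) ^ 2 := by
    rw [← b.sum_inner_mul_inner v (Matrix.toEuclideanLin P v)]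
    congr 1
    ext i
    have h1 : (inner ℝ (b i) (Matrix.toEuclideanLin P v) : ℝ)
        = (inner ℝ (Matrix.toEuclideanLin P (b i)) v : ℝ) := (hT (b i) v).symm
    rw [h1, hb i, real_inner_smul_left, real_inner_comm v (b i)]
    ring
  rw [expand]
  have parseval : ∑ i, (inner ℝ (b i) v : ℝ) ^ 2 = ‖v‖ ^ 2 := by
    have := b.sum_inner_mul_inner v v
    rw [real_inner_self_eq_norm_sq] at this
    rw [← this]
    congr 1
    ext i
    rw [real_inner_comm v (b i)]
    ring
  calc (⨅ i, μ i) * ‖v‖ ^ 2 = ∑ i, (⨅ i, μ i) * (inner ℝ (b i) v : ℝ) ^ 2 := by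
        rw [← Finset.mul_sum, parseval]
    _ ≤ ∑ i, μ i * (inner ℝ (b i) v : ℝ) ^ 2 := by
        apply Finset.sum_le_sum
        intro i _
        apply mul_le_mul_of_nonneg_right _ (sq_nonneg _)
        exact ciInf_le (Finite.bddBelow_range _) i

lemma hasDerivAt_norm_inner {E : Type*} [NormedAddCommGroup E] [InnerProductSpace ℝ E]
    {f : ℝ → E} {f' : E} {t : ℝ} (hf : HasDerivAt f f' t) (h0 : f t ≠ 0) :
    HasDerivAt (fun s => ‖f s‖) ((inner ℝ (f t) f' : ℝ) / ‖f t‖) t := by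
  have h1 : HasDerivAt (fun s => ‖f s‖ ^ 2) (2 * (inner ℝ (f t) f' : ℝ)) t := hf.norm_sq
  have h2 : (‖f t‖ ^ 2) ≠ 0 := pow_ne_zero _ (norm_ne_zero_iff.mpr h0)
  have h3 := (Real.hasDerivAt_sqrt h2).comp t h1
  have h4 : (fun s => Real.sqrt (‖f s‖ ^ 2)) = fun s => ‖f s‖ := by
    funext s; exact Real.sqrt_sq (norm_nonneg _)
  rw [Function.comp_def, h4] at h3
  refine h3.congr_deriv ?_
  rw [Real.sqrt_sq (norm_nonneg _)]
  field_simp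

section scalar

variable {L₁ L₂ L₃ : ℝ}

lemma qf_pos (h1 : 0 ≤ L₁) (h2 : 0 ≤ L₂) (h3 : 0 < L₃) {s : ℝ} (hs : 0 ≤ s) :
    0 < L₁ * s ^ 2 + L₂ * s + L₃ := by
  nlinarith [mul_nonneg h1 (sq_nonneg s), mul_nonneg h2 hs]

lemma q_contOn (h1 : 0 ≤ L₁) (h2 : 0 ≤ L₂) (h3 : 0 < L₃) :
    ContinuousOn (fun s => 1 / (L₁ * s ^ 2 + L₂ * s + L₃)) (Set.Ici 0) := by
  apply ContinuousOn.div continuousOn_const (by fun_prop)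
  exact fun s hs => (qf_pos h1 h2 h3 hs).ne'

lemma q_int (h1 : 0 ≤ L₁) (h2 : 0 ≤ L₂) (h3 : 0 < L₃) {a b : ℝ} (ha : 0 ≤ a) (hb : 0 ≤ b) :
    IntervalIntegrable (fun s => 1 / (L₁ * s ^ 2 + L₂ * s + L₃)) MeasureTheory.volume a b := by
  apply ContinuousOn.intervalIntegrable
  apply (q_contOn h1 h2 h3).mono
  intro s hs
  rcases Set.mem_uIcc.mp hs with h | h
  · exact le_trans ha h.1
  · exact le_trans hb h.1

lemma F_sub_eq (h1 : 0 ≤ L₁) (h2 : 0 ≤ L₂) (h3 : 0 < L₃) {a b : ℝ} (ha : 0 ≤ a) (hb : 0 ≤ b) :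
    (∫ s in (0:ℝ)..b, 1 / (L₁ * s ^ 2 + L₂ * s + L₃))
      - (∫ s in (0:ℝ)..a, 1 / (L₁ * s ^ 2 + L₂ * s + L₃))
      = ∫ s in a..b, 1 / (L₁ * s ^ 2 + L₂ * s + L₃) :=
  intervalIntegral.integral_interval_sub_left (q_int h1 h2 h3 le_rfl hb)
    (q_int h1 h2 h3 le_rfl ha)

lemma F_sub_nonneg (h1 : 0 ≤ L₁) (h2 : 0 ≤ L₂) (h3 : 0 < L₃) {a b : ℝ}
    (ha : 0 ≤ a) (hab : a ≤ b) :
    0 ≤ (∫ s in (0:ℝ)..b, 1 / (L₁ * s ^ 2 + L₂ * s + L₃))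
      - (∫ s in (0:ℝ)..a, 1 / (L₁ * s ^ 2 + L₂ * s + L₃)) := by
  rw [F_sub_eq h1 h2 h3 ha (le_trans ha hab)]
  apply intervalIntegral.integral_nonneg hab
  intro s hs
  exact le_of_lt (one_div_pos.mpr (qf_pos h1 h2 h3 (le_trans ha hs.1)))

lemma F_sub_le (h1 : 0 ≤ L₁) (h2 : 0 ≤ L₂) (h3 : 0 < L₃) {a b : ℝ}
    (ha : 0 ≤ a) (hab : a ≤ b) :
    (∫ s in (0:ℝ)..b, 1 / (L₁ * s ^ 2 + L₂ * s + L₃))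
      - (∫ s in (0:ℝ)..a, 1 / (L₁ * s ^ 2 + L₂ * s + L₃)) ≤ (b - a) * (1 / L₃) := by
  rw [F_sub_eq h1 h2 h3 ha (le_trans ha hab)]
  have hle : ∀ s ∈ Set.Icc a b, 1 / (L₁ * s ^ 2 + L₂ * s + L₃) ≤ 1 / L₃ := by
    intro s hs
    apply one_div_le_one_div_of_le h3
    nlinarith [mul_nonneg h1 (sq_nonneg s), mul_nonneg h2 (le_trans ha hs.1)]
  calc (∫ s in a..b, 1 / (L₁ * s ^ 2 + L₂ * s + L₃)) ≤ ∫ _ in a..b, (1 / L₃) := by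
        apply intervalIntegral.integral_mono_on hab
          (q_int h1 h2 h3 ha (le_trans ha hab)) intervalIntegrable_const hle
    _ = (b - a) * (1 / L₃) := by simp [intervalIntegral.integral_const, smul_eq_mul]
  
lemma F_contOn (h1 : 0 ≤ L₁) (h2 : 0 ≤ L₂) (h3 : 0 < L₃) :
    ContinuousOn (fun u => ∫ s in (0:ℝ)..u, 1 / (L₁ * s ^ 2 + L₂ * s + L₃)) (Set.Ici 0) := by
  apply LipschitzOnWith.continuousOn (K := Real.toNNReal (1 / L₃))
  apply LipschitzOnWith.of_dist_le_mul
  intro a ha b hb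
  rw [Real.dist_eq, Real.dist_eq, Real.coe_toNNReal _ (by positivity)]
  rcases le_total a b with hab | hab
  · rw [abs_of_nonpos (by linarith [F_sub_nonneg h1 h2 h3 ha hab]),
      abs_of_nonpos (by linarith)]
    have := F_sub_le h1 h2 h3 ha hab
    linarith [F_sub_le h1 h2 h3 (Set.mem_Ici.mp ha) hab]
  · rw [abs_of_nonneg (by linarith [F_sub_nonneg h1 h2 h3 hb hab]),
      abs_of_nonneg (by linarith)]
    linarith [F_sub_le h1 h2 h3 (Set.mem_Ici.mp hb) hab]

lemma F_hasDerivAt (h1 : 0 ≤ L₁) (h2 : 0 ≤ L₂) (h3 : 0 < L₃) {u : ℝ} (hu : 0 < u) :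
    HasDerivAt (fun v => ∫ s in (0:ℝ)..v, 1 / (L₁ * s ^ 2 + L₂ * s + L₃))
      (1 / (L₁ * u ^ 2 + L₂ * u + L₃)) u := by
  apply intervalIntegral.integral_hasDerivAt_right (q_int h1 h2 h3 le_rfl hu.le)
  · exact ((measurable_const.div (by fun_prop)).stronglyMeasurable).stronglyMeasurableAtFilter
  · exact ContinuousAt.div continuousAt_const (by fun_prop) (qf_pos h1 h2 h3 hu.le).ne'

end scalar

lemma num_bound {ie ix nx g h L1 L3 : ℝ} (hg : 0 < g) (hh : 0 < h)
    (cs1 : ie ≤ g * nx) (cs2 : -(h * nx) ≤ ix) (hXb : nx ≤ L3 * h + L1 * g) :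
    (ie / g) * h - g * (ix / h) ≤ (L3 * h + L1 * g) * (h + g) := by
  have e1 : ie / g ≤ nx := by rw [div_le_iff₀ hg]; linarith
  have e2 : -nx ≤ ix / h := by rw [le_div_iff₀ hh]; nlinarith
  nlinarith [mul_le_mul_of_nonneg_right e1 hh.le, mul_le_mul_of_nonneg_left e2 hg.le]

lemma quot_eq {g h L1 L2 L3 : ℝ} (hh : h ≠ 0) (hL2 : L2 = L3 + L1) :
    (L3 * h + L1 * g) * (h + g) / h ^ 2 = L1 * (g / h) ^ 2 + L2 * (g / h) + L3 := by
  subst hL2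
  field_simp
  ring

/-- **Positive minimum inter-event time (exclusion of Zeno behavior).**
With `Γ = σ λ_min(P) / (2 ‖P B K‖)`, `L₁ = ‖B K‖`, `L₂ = ‖A_cl‖ + ‖B K‖`,
`L₃ = ‖A_cl‖` and `τ* = ∫₀^Γ ds / (L₁ s² + L₂ s + L₃)`, if the closed-loop
dynamics hold on `[t_k, t_{k+1}]` with error `e(t) = x(t) - x(t_k)` and the
directional trigger fires at `t_{k+1}`, then `t_{k+1} - t_k ≥ τ* > 0`. -/
theorem minimum_interevent_time {n m : ℕ}
    (A : Matrix (Fin n) (Fin n) ℝ) (B : Matrix (Fin n) (Fin m) ℝ)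
    (K : Matrix (Fin m) (Fin n) ℝ) (P : Matrix (Fin n) (Fin n) ℝ)
    (hP : P.PosDef) (σ : ℝ) (hσ : σ ∈ Set.Ioo (0 : ℝ) 1)
    (hPBK : P * B * K ≠ 0)
    (x : ℝ → EuclideanSpace ℝ (Fin n)) (hxdiff : Differentiable ℝ x)
    (tk tk1 : ℝ) (hlt : tk < tk1)
    (hdyn : ∀ t ∈ Set.Icc tk tk1, HasDerivAt x
      ((WithLp.toLp 2 ((A - B * K) *ᵥ x t + (B * K) *ᵥ (x t - x tk)) : EuclideanSpace ℝ (Fin n))) t)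
    (hxne : ∀ t ∈ Set.Icc tk tk1, x t ≠ 0)
    (hene : ∀ t ∈ Set.Ioc tk tk1, x t - x tk ≠ 0)
    (hfire : 2 * (x tk1 ⬝ᵥ ((P * B * K) *ᵥ (x tk1 - x tk)))
      ≥ σ * (x tk1 ⬝ᵥ (P *ᵥ x tk1))) :
    let Γ : ℝ := σ * (⨅ i, hP.isHermitian.eigenvalues i)
      / (2 * euclideanOpNorm (P * B * K))
    let L₁ : ℝ := euclideanOpNorm (B * K)
    let L₂ : ℝ := euclideanOpNorm (A - B * K) + euclideanOpNorm (B * K)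
    let L₃ : ℝ := euclideanOpNorm (A - B * K)
    let τstar : ℝ := ∫ s in (0 : ℝ)..Γ, 1 / (L₁ * s ^ 2 + L₂ * s + L₃)
    tk1 - tk ≥ τstar ∧ 0 < τstar := by
  obtain ⟨hσ0, hσ1⟩ := hσ
  intro Γ L₁ L₂ L₃ τstar
  set e : ℝ → EuclideanSpace ℝ (Fin n) := fun t => x t - x tk with he_def
  set X : ℝ → EuclideanSpace ℝ (Fin n) := fun t =>
    (WithLp.equiv 2 (Fin n → ℝ)).symm ((A - B * K) *ᵥ x t)
      + (WithLp.equiv 2 (Fin n → ℝ)).symm ((B * K) *ᵥ (x t - x tk)) with hX_def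
  have hX : ∀ t ∈ Set.Icc tk tk1, HasDerivAt x (X t) t := hdyn
  have hL1 : (0:ℝ) ≤ L₁ := euclideanOpNorm_nonneg _
  have hL3 : (0:ℝ) ≤ L₃ := euclideanOpNorm_nonneg _
  have hL2eq : L₂ = L₃ + L₁ := rfl
  have hL2 : (0:ℝ) ≤ L₂ := by rw [hL2eq]; exact add_nonneg hL3 hL1
  have hXnorm : ∀ t ∈ Set.Icc tk tk1, ‖X t‖ ≤ L₃ * ‖x t‖ + L₁ * ‖e t‖ := by
    intro t ht
    calc ‖X t‖ ≤ ‖(WithLp.equiv 2 (Fin n → ℝ)).symm ((A - B * K) *ᵥ x t)‖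
          + ‖(WithLp.equiv 2 (Fin n → ℝ)).symm ((B * K) *ᵥ (x t - x tk))‖ := norm_add_le _ _
      _ ≤ L₃ * ‖x t‖ + L₁ * ‖e t‖ :=
          add_le_add (mulVec_norm_le _ _) (mulVec_norm_le _ _)
  have hh : ∀ t ∈ Set.Icc tk tk1, 0 < ‖x t‖ := fun t ht => norm_pos_iff.mpr (hxne t ht)
  have hcontx : Continuous x := hxdiff.continuous
  have hconte : Continuous e := hcontx.sub continuous_const
  rcases hL3.lt_or_eq with hL3pos | hL3zero
  · -- main case 0 < L₃
    have hne' : Nonempty (Fin n) := by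
      by_contra hcon
      apply hPBK
      ext i j
      exact absurd ⟨i⟩ hcon
    set lam := ⨅ i, hP.isHermitian.eigenvalues i with hlam
    have hlam_pos : 0 < lam := by
      obtain ⟨i1, _, hi1⟩ := Finset.exists_min_image Finset.univ hP.isHermitian.eigenvalues
        ⟨Classical.arbitrary _, Finset.mem_univ _⟩
      exact lt_of_lt_of_le (hP.eigenvalues_pos i1)
        (le_ciInf fun j => hi1 j (Finset.mem_univ _))
    set N := euclideanOpNorm (P * B * K) with hNdef
    have hNpos : 0 < N := euclideanOpNorm_pos hPBK
    have hΓ : Γ = σ * lam / (2 * N) := rfl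
    have hx1 : 0 < ‖x tk1‖ := hh tk1 ⟨hlt.le, le_rfl⟩
    have hCS : x tk1 ⬝ᵥ ((P * B * K) *ᵥ (x tk1 - x tk)) ≤ N * (‖x tk1‖ * ‖e tk1‖) := by
      have h1 : x tk1 ⬝ᵥ ((P * B * K) *ᵥ (x tk1 - x tk))
          = (inner ℝ (x tk1)
              ((WithLp.equiv 2 (Fin n → ℝ)).symm ((P * B * K) *ᵥ (x tk1 - x tk))) : ℝ) :=
        dotProduct_eq_inner (x tk1) ((WithLp.equiv 2 (Fin n → ℝ)).symm ((P * B * K) *ᵥ (x tk1 - x tk)))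
      rw [h1]
      calc (inner ℝ (x tk1)
              ((WithLp.equiv 2 (Fin n → ℝ)).symm ((P * B * K) *ᵥ (x tk1 - x tk))) : ℝ)
          ≤ ‖x tk1‖ * ‖(WithLp.equiv 2 (Fin n → ℝ)).symm ((P * B * K) *ᵥ (x tk1 - x tk))‖ :=
            real_inner_le_norm _ _
        _ ≤ ‖x tk1‖ * (N * ‖e tk1‖) :=
            mul_le_mul_of_nonneg_left (mulVec_norm_le _ _) (norm_nonneg _)
        _ = N * (‖x tk1‖ * ‖e tk1‖) := by ring
    have hRay : lam * ‖x tk1‖ ^ 2 ≤ x tk1 ⬝ᵥ (P *ᵥ x tk1) := lamMin_mul_le hP (x tk1)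
    have hΓ_le : Γ ≤ ‖e tk1‖ / ‖x tk1‖ := by
      have key : σ * (lam * ‖x tk1‖ ^ 2) ≤ 2 * (N * (‖x tk1‖ * ‖e tk1‖)) := by
        calc σ * (lam * ‖x tk1‖ ^ 2) ≤ σ * (x tk1 ⬝ᵥ (P *ᵥ x tk1)) :=
              mul_le_mul_of_nonneg_left hRay hσ0.le
          _ ≤ 2 * (x tk1 ⬝ᵥ ((P * B * K) *ᵥ (x tk1 - x tk))) := hfire
          _ ≤ 2 * (N * (‖x tk1‖ * ‖e tk1‖)) := by linarith
      have key2 : σ * lam * ‖x tk1‖ ≤ ‖e tk1‖ * (2 * N) := by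
        apply le_of_mul_le_mul_right _ hx1
        calc σ * lam * ‖x tk1‖ * ‖x tk1‖ = σ * (lam * ‖x tk1‖ ^ 2) := by ring
          _ ≤ 2 * (N * (‖x tk1‖ * ‖e tk1‖)) := key
          _ = ‖e tk1‖ * (2 * N) * ‖x tk1‖ := by ring
      rw [hΓ, div_le_div_iff₀ (mul_pos two_pos hNpos) hx1]
      exact key2
    have hΓpos : 0 < Γ := by rw [hΓ]; positivity
    set r : ℝ → ℝ := fun t => ‖e t‖ / ‖x t‖ with hr
    have hr_nonneg : ∀ t, 0 ≤ r t := fun t => div_nonneg (norm_nonneg _) (norm_nonneg _)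
    have hrtk : r tk = 0 := by simp [hr, he_def]
    have hr_cont : ContinuousOn r (Set.Icc tk tk1) :=
      ContinuousOn.div hconte.norm.continuousOn hcontx.norm.continuousOn
        (fun t ht => (hh t ht).ne')
    set q : ℝ → ℝ := fun s => 1 / (L₁ * s ^ 2 + L₂ * s + L₃) with hq
    set Fn : ℝ → ℝ := fun u => ∫ s in (0:ℝ)..u, q s with hFn
    have hτ : τstar = Fn Γ := rfl
    set r' : ℝ → ℝ := fun t =>
      (((inner ℝ (e t) (X t) : ℝ) / ‖e t‖) * ‖x t‖
        - ‖e t‖ * ((inner ℝ (x t) (X t) : ℝ) / ‖x t‖)) / ‖x t‖ ^ 2 with hr'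
    have hrd : ∀ t ∈ Set.Ioo tk tk1, HasDerivAt r (r' t) t := by
      intro t ht
      have htI : t ∈ Set.Icc tk tk1 := ⟨ht.1.le, ht.2.le⟩
      have het : e t ≠ 0 := hene t ⟨ht.1, ht.2.le⟩
      have hde : HasDerivAt e (X t) t := (hX t htI).sub_const (x tk)
      have h1 : HasDerivAt (fun s => ‖e s‖) ((inner ℝ (e t) (X t) : ℝ) / ‖e t‖) t :=
        hasDerivAt_norm_inner hde het
      have h2 : HasDerivAt (fun s => ‖x s‖) ((inner ℝ (x t) (X t) : ℝ) / ‖x t‖) t :=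
        hasDerivAt_norm_inner (hX t htI) (hxne t htI)
      exact h1.div h2 (hh t htI).ne'
    have hrpos : ∀ t ∈ Set.Ioo tk tk1, 0 < r t := fun t ht =>
      div_pos (norm_pos_iff.mpr (hene t ⟨ht.1, ht.2.le⟩)) (hh t ⟨ht.1.le, ht.2.le⟩)
    have hφd : ∀ t ∈ Set.Ioo tk tk1,
        HasDerivAt (fun s => Fn (r s)) (q (r t) * r' t) t := by
      intro t ht
      exact (F_hasDerivAt hL1 hL2 hL3pos (hrpos t ht)).comp t (hrd t ht)
    have hφcont : ContinuousOn (fun s => Fn (r s)) (Set.Icc tk tk1) :=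
      (F_contOn hL1 hL2 hL3pos).comp hr_cont (fun t _ => hr_nonneg t)
    obtain ⟨c, hc, hceq⟩ := exists_hasDerivAt_eq_slope (fun s => Fn (r s))
      (fun t => q (r t) * r' t) hlt hφcont hφd
    have hcI : c ∈ Set.Icc tk tk1 := ⟨hc.1.le, hc.2.le⟩
    have hhc : 0 < ‖x c‖ := hh c hcI
    have hgc : 0 < ‖e c‖ := norm_pos_iff.mpr (hene c ⟨hc.1, hc.2.le⟩)
    have hXc : ‖X c‖ ≤ L₃ * ‖x c‖ + L₁ * ‖e c‖ := hXnorm c hcI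
    have cs1 : (inner ℝ (e c) (X c) : ℝ) ≤ ‖e c‖ * ‖X c‖ := real_inner_le_norm _ _
    have cs2 : -(‖x c‖ * ‖X c‖) ≤ (inner ℝ (x c) (X c) : ℝ) := by
      have h6 := abs_real_inner_le_norm (x c) (X c)
      linarith [neg_abs_le (inner ℝ (x c) (X c) : ℝ), abs_le.mp h6]
    have hnum : ((inner ℝ (e c) (X c) : ℝ) / ‖e c‖) * ‖x c‖
        - ‖e c‖ * ((inner ℝ (x c) (X c) : ℝ) / ‖x c‖)
        ≤ (L₃ * ‖x c‖ + L₁ * ‖e c‖) * (‖x c‖ + ‖e c‖) :=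
      num_bound hgc hhc cs1 cs2 hXc
    have hrc : r c = ‖e c‖ / ‖x c‖ := rfl
    have hquot : r' c ≤ L₁ * (r c) ^ 2 + L₂ * (r c) + L₃ := by
      have hkey : (L₃ * ‖x c‖ + L₁ * ‖e c‖) * (‖x c‖ + ‖e c‖) / ‖x c‖ ^ 2
          = L₁ * (r c) ^ 2 + L₂ * (r c) + L₃ := by
        rw [hrc]; exact quot_eq hhc.ne' hL2eq
      rw [← hkey]
      exact (div_le_div_iff_of_pos_right (pow_pos hhc 2)).mpr hnum
    have hden : 0 < L₁ * (r c) ^ 2 + L₂ * (r c) + L₃ := qf_pos hL1 hL2 hL3pos (hr_nonneg c)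
    have hφ'le : q (r c) * r' c ≤ 1 := by
      have : q (r c) * r' c = r' c / (L₁ * (r c) ^ 2 + L₂ * (r c) + L₃) := by
        rw [hq]; ring
      rw [this, div_le_one hden]
      exact hquot
    have hFntk : Fn (r tk) = 0 := by rw [hrtk, hFn]; simp
    rw [hceq] at hφ'le
    have hmain : Fn (r tk1) ≤ tk1 - tk := by
      rw [div_le_one (by linarith)] at hφ'le
      linarith
    have hmono : Fn Γ ≤ Fn (r tk1) :=
      sub_nonneg.mp (F_sub_nonneg hL1 hL2 hL3pos hΓpos.le hΓ_le)
    constructor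
    · rw [ge_iff_le, hτ]
      linarith
    · rw [hτ]
      exact intervalIntegral.intervalIntegral_pos_of_pos_on
        (q_int hL1 hL2 hL3pos le_rfl hΓpos.le)
        (fun s hs => one_div_pos.mpr (qf_pos hL1 hL2 hL3pos hs.1.le)) hΓpos
  · -- degenerate case L₃ = 0 : contradiction with hene
    exfalso
    have hz : ∀ v : EuclideanSpace ℝ (Fin n),
        ((WithLp.equiv 2 (Fin n → ℝ)).symm ((A - B * K) *ᵥ v) : EuclideanSpace ℝ (Fin n)) = 0 :=
      euclideanOpNorm_eq_zero hL3zero.symm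
    have heD : ∀ t ∈ Set.Ico tk tk1, HasDerivWithinAt e (X t) (Set.Ici t) t := fun t ht =>
      (((hX t (Set.Ico_subset_Icc_self ht)).sub_const (x tk)).hasDerivWithinAt)
    have hbd : ∀ t ∈ Set.Ico tk tk1, ‖X t‖ ≤ L₁ * ‖e t‖ + 0 := by
      intro t ht
      have : X t = (WithLp.equiv 2 (Fin n → ℝ)).symm ((B * K) *ᵥ (x t - x tk)) := by
        rw [hX_def]
        simp only [hz, zero_add]
      rw [this, add_zero]
      exact mulVec_norm_le _ _
    have hgr := norm_le_gronwallBound_of_norm_deriv_right_le (f := e) (f' := X)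
      (δ := 0) (K := L₁) (ε := 0) hconte.continuousOn heD (by simp [he_def]) hbd
      tk1 ⟨hlt.le, le_rfl⟩
    rw [gronwallBound_ε0_δ0] at hgr
    exact hene tk1 ⟨hlt, le_rfl⟩ (norm_le_zero_iff.mp hgr)
end
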